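/- Under the same hypotheses, κ' = (η₁ cos(γ - α₁))/ℓ₁³ + (η₂ cos(γ - α₂))/ℓ₂³ and κ'' = η₁/ℓ₁⁴ + η₂/ℓ₂⁴ - κ·[η₁ sin(γ - α₁)/ℓ₁³ + η₂ sin(γ - α₂)/ℓ₂³], where κ = η₁/ℓ₁² + η₂/ℓ₂². -/
import Mathlib


open Real

theorem stmt7 (l1 l2 : ℝ) (hl1 : 0 < l1) (hl2 : 0 < l2)
    (x₁ x₂ α₁ α₂ η₁ η₂ γ : ℝ → ℝ) (p₁ p₂ : ℝ)
    (hL₁ : ∀ t, Real.cos (γ t) =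
      p₁ - η₁ t / l1 * Real.sin (α₁ t) - η₂ t / l2 * Real.sin (α₂ t))
    (hL₂ : ∀ t, Real.sin (γ t) =
      p₂ + η₁ t / l1 * Real.cos (α₁ t) + η₂ t / l2 * Real.cos (α₂ t))
    (hx₁ : ∀ t, HasDerivAt x₁ (Real.cos (γ t)) t)
    (hx₂ : ∀ t, HasDerivAt x₂ (Real.sin (γ t)) t)
    (hα₁ : ∀ t, HasDerivAt α₁ (Real.sin (γ t - α₁ t) / l1) t)
    (hα₂ : ∀ t, HasDerivAt α₂ (Real.sin (γ t - α₂ t) / l2) t)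
    (hη₁ : ∀ t, HasDerivAt η₁ (η₁ t * Real.cos (γ t - α₁ t) / l1) t)
    (hη₂ : ∀ t, HasDerivAt η₂ (η₂ t * Real.cos (γ t - α₂ t) / l2) t)
    (hγ : Differentiable ℝ γ)
    (κ : ℝ → ℝ) (hκ : ∀ t, κ t = η₁ t / l1 ^ 2 + η₂ t / l2 ^ 2) :
    (∀ t, deriv κ t =
      η₁ t * Real.cos (γ t - α₁ t) / l1 ^ 3 + η₂ t * Real.cos (γ t - α₂ t) / l2 ^ 3) ∧
    (∀ t, deriv (deriv κ) t =
      η₁ t / l1 ^ 4 + η₂ t / l2 ^ 4 -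
        κ t * (η₁ t * Real.sin (γ t - α₁ t) / l1 ^ 3 +
               η₂ t * Real.sin (γ t - α₂ t) / l2 ^ 3)) := by
  -- γ' = κ
  have hγ' : ∀ t, HasDerivAt γ (η₁ t / l1 ^ 2 + η₂ t / l2 ^ 2) t := by
    intro t
    have hg : HasDerivAt γ (deriv γ t) t := (hγ t).hasDerivAt
    have hc : HasDerivAt (fun s => Real.cos (γ s))
        (-Real.sin (γ t) * deriv γ t) t := (Real.hasDerivAt_cos (γ t)).comp t hg
    have hs : HasDerivAt (fun s => Real.sin (γ s))
        (Real.cos (γ t) * deriv γ t) t := (Real.hasDerivAt_sin (γ t)).comp t hg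
    have hR1 : HasDerivAt
        (fun s => p₁ - η₁ s / l1 * Real.sin (α₁ s) - η₂ s / l2 * Real.sin (α₂ s))
        (0 - ((η₁ t * Real.cos (γ t - α₁ t) / l1) / l1 * Real.sin (α₁ t)
              + η₁ t / l1 * (Real.cos (α₁ t) * (Real.sin (γ t - α₁ t) / l1)))
           - ((η₂ t * Real.cos (γ t - α₂ t) / l2) / l2 * Real.sin (α₂ t)
              + η₂ t / l2 * (Real.cos (α₂ t) * (Real.sin (γ t - α₂ t) / l2)))) t := by
      exact ((hasDerivAt_const t p₁).sub
        (((hη₁ t).div_const l1).mul ((Real.hasDerivAt_sin (α₁ t)).comp t (hα₁ t)))).sub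
        (((hη₂ t).div_const l2).mul ((Real.hasDerivAt_sin (α₂ t)).comp t (hα₂ t)))
    have hR2 : HasDerivAt
        (fun s => p₂ + η₁ s / l1 * Real.cos (α₁ s) + η₂ s / l2 * Real.cos (α₂ s))
        (0 + ((η₁ t * Real.cos (γ t - α₁ t) / l1) / l1 * Real.cos (α₁ t)
              + η₁ t / l1 * (-Real.sin (α₁ t) * (Real.sin (γ t - α₁ t) / l1)))
           + ((η₂ t * Real.cos (γ t - α₂ t) / l2) / l2 * Real.cos (α₂ t)
              + η₂ t / l2 * (-Real.sin (α₂ t) * (Real.sin (γ t - α₂ t) / l2)))) t := by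
      exact ((hasDerivAt_const t p₂).add
        (((hη₁ t).div_const l1).mul ((Real.hasDerivAt_cos (α₁ t)).comp t (hα₁ t)))).add
        (((hη₂ t).div_const l2).mul ((Real.hasDerivAt_cos (α₂ t)).comp t (hα₂ t)))
    have hfe1 : (fun s => Real.cos (γ s))
        = fun s => p₁ - η₁ s / l1 * Real.sin (α₁ s) - η₂ s / l2 * Real.sin (α₂ s) :=
      funext hL₁
    have hfe2 : (fun s => Real.sin (γ s))
        = fun s => p₂ + η₁ s / l1 * Real.cos (α₁ s) + η₂ s / l2 * Real.cos (α₂ s) :=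
      funext hL₂
    have e1 := (hfe1 ▸ hc).unique hR1
    have e2 := (hfe2 ▸ hs).unique hR2
    have key : deriv γ t = η₁ t / l1 ^ 2 + η₂ t / l2 ^ 2 := by
      have p1 := Real.sin_sq_add_cos_sq (γ t)
      have pa1 := Real.sin_sq_add_cos_sq (α₁ t)
      have pa2 := Real.sin_sq_add_cos_sq (α₂ t)
      simp only [Real.cos_sub, Real.sin_sub] at e1 e2
      linear_combination (-Real.sin (γ t)) * e1 + Real.cos (γ t) * e2
        - (deriv γ t - η₁ t / l1 ^ 2 - η₂ t / l2 ^ 2) * p1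
        + (η₁ t / l1 ^ 2) * (Real.sin (γ t) ^ 2 + Real.cos (γ t) ^ 2) * pa1
        + (η₂ t / l2 ^ 2) * (Real.sin (γ t) ^ 2 + Real.cos (γ t) ^ 2) * pa2
    exact key ▸ hg
  have hκ' : ∀ t, HasDerivAt κ
      (η₁ t * Real.cos (γ t - α₁ t) / l1 ^ 3 + η₂ t * Real.cos (γ t - α₂ t) / l2 ^ 3) t := by
    intro t
    have hfe : (fun s => η₁ s / l1 ^ 2 + η₂ s / l2 ^ 2) = κ := (funext hκ).symm
    have h : HasDerivAt (fun s => η₁ s / l1 ^ 2 + η₂ s / l2 ^ 2)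
        ((η₁ t * Real.cos (γ t - α₁ t) / l1) / l1 ^ 2
          + (η₂ t * Real.cos (γ t - α₂ t) / l2) / l2 ^ 2) t :=
      ((hη₁ t).div_const (l1 ^ 2)).add ((hη₂ t).div_const (l2 ^ 2))
    have h' := hfe ▸ h
    convert h' using 1
    ring
  have part1 : ∀ t, deriv κ t =
      η₁ t * Real.cos (γ t - α₁ t) / l1 ^ 3 + η₂ t * Real.cos (γ t - α₂ t) / l2 ^ 3 :=
    fun t => (hκ' t).deriv
  refine ⟨part1, fun t => ?_⟩
  have hfe : deriv κ = fun s =>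
      η₁ s * Real.cos (γ s - α₁ s) / l1 ^ 3 + η₂ s * Real.cos (γ s - α₂ s) / l2 ^ 3 :=
    funext part1
  rw [hfe]
  have hθ₁ : HasDerivAt (fun s => γ s - α₁ s)
      ((η₁ t / l1 ^ 2 + η₂ t / l2 ^ 2) - Real.sin (γ t - α₁ t) / l1) t :=
    (hγ' t).sub (hα₁ t)
  have hθ₂ : HasDerivAt (fun s => γ s - α₂ s)
      ((η₁ t / l1 ^ 2 + η₂ t / l2 ^ 2) - Real.sin (γ t - α₂ t) / l2) t :=
    (hγ' t).sub (hα₂ t)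
  have h : HasDerivAt (fun s =>
      η₁ s * Real.cos (γ s - α₁ s) / l1 ^ 3 + η₂ s * Real.cos (γ s - α₂ s) / l2 ^ 3)
      (((η₁ t * Real.cos (γ t - α₁ t) / l1) * Real.cos (γ t - α₁ t)
        + η₁ t * (-Real.sin (γ t - α₁ t) *
          ((η₁ t / l1 ^ 2 + η₂ t / l2 ^ 2) - Real.sin (γ t - α₁ t) / l1))) / l1 ^ 3
       + ((η₂ t * Real.cos (γ t - α₂ t) / l2) * Real.cos (γ t - α₂ t)
        + η₂ t * (-Real.sin (γ t - α₂ t) *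
          ((η₁ t / l1 ^ 2 + η₂ t / l2 ^ 2) - Real.sin (γ t - α₂ t) / l2))) / l2 ^ 3) t :=
    (((hη₁ t).mul ((Real.hasDerivAt_cos (γ t - α₁ t)).comp t hθ₁)).div_const (l1 ^ 3)).add
      (((hη₂ t).mul ((Real.hasDerivAt_cos (γ t - α₂ t)).comp t hθ₂)).div_const (l2 ^ 3))
  rw [h.deriv, hκ t]
  have p2 := Real.sin_sq_add_cos_sq (γ t - α₁ t)
  have p3 := Real.sin_sq_add_cos_sq (γ t - α₂ t)
  linear_combination (η₁ t / l1 ^ 4) * p2 + (η₂ t / l2 ^ 4) * p3
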